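/- Let I be a network coding instance that is (ε, R, n)-feasible with a corresponding network code, and let e* be an edge of I with capacity R_{e*}. Suppose there exists a subset 𝒳'_S ⊆ 𝒳_S of the form 𝒳'_S = ∏_{i∈S} 𝒳'_i with 𝒳'_i ⊆ 𝒳_i such that: (1) the edge message X_{e*} is constant conditioned on X_S ∈ 𝒳'_S (i.e., the global encoding function of e* takes a single value on 𝒳'_S); (2) |𝒳'_i| ≥ |𝒳_i| / |𝒳_{e*}| for every i ∈ S; and (3) |𝒳'_S ∩ 𝒳_S^G| ≥ (1 − ε)·|𝒳'_S|. Then the instance I' obtained from I by removing edge e* is (ε, R − R_{e*}·1, n)-feasible, where (R − R_{e*}·1)_i = max(0, R_i − R_{e*}). -/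

import Mathlib

open scoped Classical
open Finset

noncomputable section

/-- A network coding instance `I = (N, S, T, M)`: a finite directed acyclic graph with
edge capacities, source nodes (no incoming edges), terminal nodes (no outgoing edges),
and a demand relation (`demands s t` means terminal `t` demands source `s`). -/
structure NetworkInstance where
  V : Type
  [fintypeV : Fintype V]
  [decEqV : DecidableEq V]
  E : Finset (V × V)
  cap : V × V → ℝ
  cap_pos : ∀ e ∈ E, 0 < cap e
  S : Finset V
  T : Finset V
  demands : V → V → Prop
  src_no_in : ∀ s ∈ S, ∀ e ∈ E, e.2 ≠ s
  ter_no_out : ∀ t ∈ T, ∀ e ∈ E, e.1 ≠ t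
  disjointST : Disjoint S T
  acyclic : ∃ ord : V → ℕ, ∀ e ∈ E, ord e.1 < ord e.2

attribute [instance] NetworkInstance.fintypeV NetworkInstance.decEqV

/-- A network code of blocklength `n` and rate vector `R` on the instance `I`.
Sources are independent and uniform on their (finite, nonempty) alphabets, which is modelled
by taking the whole product of the source alphabets as the (uniform) sample space.
`ge e` is the global encoding function of edge `e` (a function of the source message vector),
`dec t` the decoding function of terminal `t` (a function of the messages on incoming edges
of `t`, producing reconstructions of the demanded sources).
`local_enc` states that the message on an edge `e = (u,v)` is determined by the messages on
the incoming edges of `u` (together with the source message at `u`, when `u` is a source).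
`rate` states `H(X_i) = log₂|𝒳_i| ≥ n·R_i`, and `capBound` states `log₂|𝒳_e| ≤ n·R_e`. -/
structure NetworkCode (I : NetworkInstance) (R : I.V → ℝ) (n : ℕ) where
  srcA : I.V → Type
  edgeA : I.V × I.V → Type
  [finSrc : ∀ v, Fintype (srcA v)]
  [finEdge : ∀ e, Fintype (edgeA e)]
  [neSrc : ∀ v, Nonempty (srcA v)]
  [neEdge : ∀ e, Nonempty (edgeA e)]
  ge : (e : I.V × I.V) → ((s : {v // v ∈ I.S}) → srcA s.1) → edgeA e
  dec : (t : {v // v ∈ I.T}) →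
    ((f : {e : I.V × I.V // e ∈ I.E ∧ e.2 = t.1}) → edgeA f.1) →
    ((s : {v // v ∈ I.S ∧ I.demands v t.1}) → srcA s.1)
  local_enc : ∀ e ∈ I.E, ∀ x y : ((s : {v // v ∈ I.S}) → srcA s.1),
    (∀ s : {v // v ∈ I.S}, (s : I.V) = e.1 → x s = y s) →
    (∀ f ∈ I.E, f.2 = e.1 → ge f x = ge f y) →
    ge e x = ge e y
  rate : ∀ v ∈ I.S, (2 : ℝ) ^ ((n : ℝ) * R v) ≤ Fintype.card (srcA v)
  capBound : ∀ e ∈ I.E, (Fintype.card (edgeA e) : ℝ) ≤ (2 : ℝ) ^ ((n : ℝ) * I.cap e)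

attribute [instance] NetworkCode.finSrc NetworkCode.finEdge NetworkCode.neSrc NetworkCode.neEdge

/-- The source message vector space `𝒳_S = ∏ 𝒳_i`; the sources being independent and
uniform, the probability space is the uniform distribution on `Msg`. -/
abbrev NetworkCode.Msg {I : NetworkInstance} {R : I.V → ℝ} {n : ℕ} (C : NetworkCode I R n) : Type :=
  (s : {v // v ∈ I.S}) → C.srcA s.1

/-- Terminal `t` decodes the source vector `x` correctly. -/
def NetworkCode.Correct {I : NetworkInstance} {R : I.V → ℝ} {n : ℕ} (C : NetworkCode I R n)
    (t : {v // v ∈ I.T}) (x : C.Msg) : Prop :=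
  C.dec t (fun f => C.ge f.1 x) = fun s : {v : I.V // v ∈ I.S ∧ I.demands v t.1} => x ⟨s.1, s.2.1⟩

/-- `x` is "good": every terminal decodes it correctly. -/
def NetworkCode.Good {I : NetworkInstance} {R : I.V → ℝ} {n : ℕ} (C : NetworkCode I R n)
    (x : C.Msg) : Prop := ∀ t, C.Correct t x

/-- The code has decoding error probability at most `ε` at every terminal
(w.r.t. the uniform distribution on source messages). -/
def NetworkCode.Achieves {I : NetworkInstance} {R : I.V → ℝ} {n : ℕ} (C : NetworkCode I R n)
    (ε : ℝ) : Prop :=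
  ∀ t : {v // v ∈ I.T},
    ((Finset.univ.filter fun x : C.Msg => ¬ C.Correct t x).card : ℝ) ≤ ε * Fintype.card C.Msg

/-- `I` is `(ε, R, n)`-feasible. -/
def Feasible (I : NetworkInstance) (ε : ℝ) (R : I.V → ℝ) (n : ℕ) : Prop :=
  ∃ C : NetworkCode I R n, C.Achieves ε

/-- The instance `I'` obtained from `I` by removing the edge `e`. -/
def NetworkInstance.removeEdge (I : NetworkInstance) (e : I.V × I.V) : NetworkInstance where
  V := I.V
  fintypeV := I.fintypeV
  decEqV := I.decEqV
  E := I.E.erase e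
  cap := I.cap
  cap_pos := fun f hf => I.cap_pos f (Finset.mem_of_mem_erase hf)
  S := I.S
  T := I.T
  demands := I.demands
  src_no_in := fun s hs f hf => I.src_no_in s hs f (Finset.mem_of_mem_erase hf)
  ter_no_out := fun t ht f hf => I.ter_no_out t ht f (Finset.mem_of_mem_erase hf)
  disjointST := I.disjointST
  acyclic := ⟨I.acyclic.choose, fun f hf => I.acyclic.choose_spec f (Finset.mem_of_mem_erase hf)⟩

/-- The reduced rate vector `R - R_{e*}·1`, i.e. `i ↦ max 0 (R_i - R_{e*})`. -/
def reducedRate (I : NetworkInstance) (R : I.V → ℝ) (e : I.V × I.V) : I.V → ℝ :=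
  fun v => max 0 (R v - I.cap e)

section AuxRemoval

variable {I : NetworkInstance} {R : I.V → ℝ} {n : ℕ} (C : NetworkCode I R n)

/-- The restricted source alphabet at vertex `v`. -/
def AuxSrc (A' : (s : {v // v ∈ I.S}) → Finset (C.srcA s.1)) (v : I.V) : Type :=
  {a : C.srcA v // ∀ h : v ∈ I.S, a ∈ A' ⟨v, h⟩}

instance (A' : (s : {v // v ∈ I.S}) → Finset (C.srcA s.1)) (v : I.V) :
    Fintype (AuxSrc C A' v) := by
  unfold AuxSrc; exact Subtype.fintype _

/-- Embedding of restricted message vectors into the original message space. -/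
def auxEmb (A' : (s : {v // v ∈ I.S}) → Finset (C.srcA s.1))
    (x : (s : {v // v ∈ I.S}) → AuxSrc C A' s.1) : C.Msg :=
  fun s => (x s).1

lemma auxEmb_mem (A' : (s : {v // v ∈ I.S}) → Finset (C.srcA s.1))
    (x : (s : {v // v ∈ I.S}) → AuxSrc C A' s.1) (s : {v // v ∈ I.S}) :
    auxEmb C A' x s ∈ A' s := (x s).2 s.2

lemma auxEmb_inj (A' : (s : {v // v ∈ I.S}) → Finset (C.srcA s.1)) :
    Function.Injective (auxEmb C A') := by
  intro x y h
  funext s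
  exact Subtype.ext (congrFun h s)

lemma auxSrc_card (A' : (s : {v // v ∈ I.S}) → Finset (C.srcA s.1))
    (v : I.V) (hv : v ∈ I.S) :
    Fintype.card (AuxSrc C A' v) = (A' ⟨v, hv⟩).card := by
  have e : AuxSrc C A' v ≃ {a : C.srcA v // a ∈ A' ⟨v, hv⟩} :=
    { toFun := fun a => ⟨a.1, a.2 hv⟩
      invFun := fun a => ⟨a.1, fun _ => a.2⟩
      left_inv := fun a => rfl
      right_inv := fun a => rfl }
  rw [Fintype.card_congr e]
  exact Fintype.card_coe _

/-- Extension of an edge-message assignment on `I \ e*` to one on `I`,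
putting the constant `c` on `e*`. -/
def extAssign (estar : I.V × I.V) (c : C.edgeA estar) (t : {v // v ∈ I.T})
    (f : (f : {e : I.V × I.V // e ∈ I.E.erase estar ∧ e.2 = t.1}) → C.edgeA f.1)
    (g : {e : I.V × I.V // e ∈ I.E ∧ e.2 = t.1}) : C.edgeA g.1 :=
  if h : g.1 = estar then h.symm ▸ c
  else f ⟨g.1, Finset.mem_erase.mpr ⟨h, g.2.1⟩, g.2.2⟩

lemma extAssign_ge (estar : I.V × I.V) (c : C.edgeA estar)
    (A' : (s : {v // v ∈ I.S}) → Finset (C.srcA s.1))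
    (hc : ∀ x : C.Msg, (∀ s, x s ∈ A' s) → C.ge estar x = c)
    (t : {v // v ∈ I.T}) (z : C.Msg) (hz : ∀ s, z s ∈ A' s) :
    extAssign C estar c t (fun f => C.ge f.1 z) =
      fun g : {e : I.V × I.V // e ∈ I.E ∧ e.2 = t.1} => C.ge g.1 z := by
  funext g
  rcases g with ⟨g, hg⟩
  show (if h : g = estar then h.symm ▸ c else C.ge g z) = C.ge g z
  split
  next h =>
    subst h
    exact (hc z hz).symm
  next h => rfl

/-- The reduced code on `I \ e*` obtained by restricting sources to `A'`. -/
def reducedCode (estar : I.V × I.V) (c : C.edgeA estar)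
    (A' : (s : {v // v ∈ I.S}) → Finset (C.srcA s.1))
    (hc : ∀ x : C.Msg, (∀ s, x s ∈ A' s) → C.ge estar x = c)
    (instN : ∀ v : I.V, Nonempty (AuxSrc C A' v))
    (hrate : ∀ v ∈ I.S,
      (2 : ℝ) ^ ((n : ℝ) * reducedRate I R estar v) ≤ Fintype.card (AuxSrc C A' v)) :
    NetworkCode (I.removeEdge estar) (reducedRate I R estar) n where
  srcA := fun v => AuxSrc C A' v
  edgeA := fun e => C.edgeA e
  finSrc := fun (v : I.V) => (inferInstance : Fintype (AuxSrc C A' v))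
  finEdge := fun e => C.finEdge e
  neSrc := fun v => instN v
  neEdge := fun e => C.neEdge e
  ge := fun e x => C.ge e (auxEmb C A' x)
  dec := fun t f s =>
    if h : C.dec t (extAssign C estar c t f) s ∈ A' ⟨s.1, s.2.1⟩ then
      ⟨C.dec t (extAssign C estar c t f) s, fun _ => h⟩
    else Classical.choice (instN s.1)
  local_enc := by
    intro e he' x y hsrc hedges
    refine C.local_enc e (Finset.mem_of_mem_erase he') (auxEmb C A' x) (auxEmb C A' y) ?_ ?_
    · intro s hs
      exact congrArg Subtype.val (hsrc s hs)
    · intro f hf hf2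
      by_cases hfe : f = estar
      · subst hfe
        rw [hc (auxEmb C A' x) (auxEmb_mem C A' x), hc (auxEmb C A' y) (auxEmb_mem C A' y)]
      · exact hedges f (Finset.mem_erase.mpr ⟨hfe, hf⟩) hf2
  rate := hrate
  capBound := fun e heE => C.capBound e (Finset.mem_of_mem_erase heE)

lemma reducedCode_correct (estar : I.V × I.V) (c : C.edgeA estar)
    (A' : (s : {v // v ∈ I.S}) → Finset (C.srcA s.1))
    (hc : ∀ x : C.Msg, (∀ s, x s ∈ A' s) → C.ge estar x = c)
    (instN : ∀ v : I.V, Nonempty (AuxSrc C A' v))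
    (hrate : ∀ v ∈ I.S,
      (2 : ℝ) ^ ((n : ℝ) * reducedRate I R estar v) ≤ Fintype.card (AuxSrc C A' v))
    (t : {v // v ∈ I.T})
    (x : (s : {v // v ∈ I.S}) → AuxSrc C A' s.1)
    (hcor : C.Correct t (auxEmb C A' x)) :
    (reducedCode C estar c A' hc instN hrate).Correct t x := by
  unfold NetworkCode.Correct reducedCode
  funext s
  show (if h : C.dec t (extAssign C estar c t
        (fun f => C.ge f.1 (auxEmb C A' x))) s ∈ A' ⟨s.1, s.2.1⟩ then
      (⟨C.dec t (extAssign C estar c t (fun f => C.ge f.1 (auxEmb C A' x))) s, fun _ => h⟩ :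
        AuxSrc C A' s.1)
    else Classical.choice (instN s.1)) = x ⟨s.1, s.2.1⟩
  rw [extAssign_ge C estar c A' hc t (auxEmb C A' x) (auxEmb_mem C A' x)]
  unfold NetworkCode.Correct at hcor
  rw [hcor]
  have hmem : auxEmb C A' x ⟨s.1, s.2.1⟩ ∈ A' ⟨s.1, s.2.1⟩ :=
    auxEmb_mem C A' x ⟨s.1, s.2.1⟩
  rw [dif_pos hmem]
  exact Subtype.ext rfl

end AuxRemoval

/-- **Corollary 1.** If `I` is `(ε,R,n)`-feasible with code `C`, and there is a product subset
`𝒳'_S = ∏_i 𝒳'_i ⊆ 𝒳_S` on which (1) the message on `e*` is constant, (2) each factor satisfies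
`|𝒳'_i| ≥ |𝒳_i|/|𝒳_{e*}|`, and (3) `|𝒳'_S ∩ 𝒳_S^G| ≥ (1-ε)|𝒳'_S|`, then removing `e*` leaves
the instance `(ε, R - R_{e*}·1, n)`-feasible. -/
theorem local_edge_removal_of_product_subset
    (I : NetworkInstance) (ε : ℝ) (R : I.V → ℝ) (n : ℕ)
    (C : NetworkCode I R n) (hfeas : C.Achieves ε)
    (estar : I.V × I.V) (he : estar ∈ I.E)
    (A' : (s : {v // v ∈ I.S}) → Finset (C.srcA s.1))
    (h1 : ∃ c : C.edgeA estar, ∀ x : C.Msg, (∀ s, x s ∈ A' s) → C.ge estar x = c)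
    (h2 : ∀ s : {v // v ∈ I.S},
      (Fintype.card (C.srcA s.1) : ℝ) / (Fintype.card (C.edgeA estar) : ℝ) ≤ ((A' s).card : ℝ))
    (h3 : (1 - ε) * ((Finset.univ.filter fun x : C.Msg => ∀ s, x s ∈ A' s).card : ℝ) ≤
      ((Finset.univ.filter fun x : C.Msg => (∀ s, x s ∈ A' s) ∧ C.Good x).card : ℝ)) :
    Feasible (I.removeEdge estar) ε (reducedRate I R estar) n := by
  classical
  obtain ⟨c, hc⟩ := h1
  have hedgepos : (0 : ℝ) < (Fintype.card (C.edgeA estar) : ℝ) := by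
    exact_mod_cast Fintype.card_pos
  have hA'ne : ∀ s : {v // v ∈ I.S}, (A' s).Nonempty := by
    intro s
    have hpos : (0 : ℝ) <
        (Fintype.card (C.srcA s.1) : ℝ) / (Fintype.card (C.edgeA estar) : ℝ) :=
      div_pos (by exact_mod_cast Fintype.card_pos) hedgepos
    have h' := lt_of_lt_of_le hpos (h2 s)
    have h'' : 0 < (A' s).card := by exact_mod_cast h'
    exact Finset.card_pos.mp h''
  have instN : ∀ v : I.V, Nonempty (AuxSrc C A' v) := by
    intro v
    by_cases h : v ∈ I.S
    · obtain ⟨a, ha⟩ := hA'ne ⟨v, h⟩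
      exact ⟨⟨a, fun _ => ha⟩⟩
    · obtain ⟨a⟩ := C.neSrc v
      exact ⟨⟨a, fun h' => absurd h' h⟩⟩
  have hrate : ∀ v ∈ I.S,
      (2 : ℝ) ^ ((n : ℝ) * reducedRate I R estar v) ≤ Fintype.card (AuxSrc C A' v) := by
    intro v hv
    rw [auxSrc_card C A' v hv]
    rcases le_or_gt (R v) (I.cap estar) with hle | hlt
    · have hmax : reducedRate I R estar v = 0 := by
        simp only [reducedRate]
        exact max_eq_left (sub_nonpos.mpr hle)
      rw [hmax, mul_zero, Real.rpow_zero]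
      have hpos : 0 < (A' ⟨v, hv⟩).card := Finset.card_pos.mpr (hA'ne ⟨v, hv⟩)
      exact_mod_cast hpos
    · have hmax : reducedRate I R estar v = R v - I.cap estar := by
        simp only [reducedRate]
        exact max_eq_right (le_of_lt (sub_pos.mpr hlt))
      rw [hmax]
      have key : (2 : ℝ) ^ ((n : ℝ) * (R v - I.cap estar)) =
          (2 : ℝ) ^ ((n : ℝ) * R v) / (2 : ℝ) ^ ((n : ℝ) * I.cap estar) := by
        rw [← Real.rpow_sub (by norm_num)]
        ring_nf
      rw [key]
      calc (2 : ℝ) ^ ((n : ℝ) * R v) / (2 : ℝ) ^ ((n : ℝ) * I.cap estar)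
          ≤ (Fintype.card (C.srcA v) : ℝ) / (Fintype.card (C.edgeA estar) : ℝ) := by
            apply div_le_div₀ (by positivity) (C.rate v hv) hedgepos
            exact C.capBound estar he
        _ ≤ ((A' ⟨v, hv⟩).card : ℝ) := h2 ⟨v, hv⟩
  refine ⟨reducedCode C estar c A' hc instN hrate, ?_⟩
  intro t
  set P := Finset.univ.filter fun x : C.Msg => ∀ s, x s ∈ A' s with hP
  set B := Finset.univ.filter fun x : C.Msg => (∀ s, x s ∈ A' s) ∧ C.Good x with hB
  have hBP : B ⊆ P := by
    intro x hx
    rw [hB, Finset.mem_filter] at hx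
    rw [hP, Finset.mem_filter]
    exact ⟨hx.1, hx.2.1⟩
  have hcardMsg : Fintype.card ((s : {v // v ∈ I.S}) → AuxSrc C A' s.1) = P.card := by
    rw [← Finset.card_univ]
    apply Finset.card_bij (fun x _ => auxEmb C A' x)
    · intro a _
      rw [hP, Finset.mem_filter]
      exact ⟨Finset.mem_univ _, auxEmb_mem C A' a⟩
    · intro a _ b _ h
      exact auxEmb_inj C A' h
    · intro x hx
      rw [hP, Finset.mem_filter] at hx
      exact ⟨fun s => ⟨x s, fun _ => hx.2 s⟩, Finset.mem_univ _, rfl⟩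
  haveI : Fintype (reducedCode C estar c A' hc instN hrate).Msg :=
    @Pi.instFintype _ _ _ _ (fun s => (reducedCode C estar c A' hc instN hrate).finSrc s.1)
  have hsub : (Finset.univ.filter fun x =>
      ¬ (reducedCode C estar c A' hc instN hrate).Correct t x).card ≤ (P \ B).card := by
    apply Finset.card_le_card_of_injOn (auxEmb C A')
    · intro x hx
      have hx :=
        (Finset.mem_filter (s := Finset.univ) (a := x)
          (p := fun x => ¬ (reducedCode C estar c A' hc instN hrate).Correct t x)).mp
          (by convert Finset.mem_coe.mp hx <;> exact Iff.rfl)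
      refine Finset.mem_coe.mpr (Finset.mem_sdiff.mpr ?_)
      constructor
      · rw [hP, Finset.mem_filter]
        exact ⟨Finset.mem_univ _, auxEmb_mem C A' x⟩
      · intro hmem
        rw [hB, Finset.mem_filter] at hmem
        exact hx.2 (reducedCode_correct C estar c A' hc instN hrate t x (hmem.2.2 t))
    · intro a _ b _ h
      exact auxEmb_inj C A' h
  have hsdiff : ((P \ B).card : ℝ) = (P.card : ℝ) - (B.card : ℝ) := by
    rw [Finset.card_sdiff_of_subset hBP]
    push_cast [Nat.cast_sub (Finset.card_le_card hBP)]
    ring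
  have key : ((P \ B).card : ℝ) ≤ ε * P.card := by
    rw [hsdiff]; linarith [h3]
  calc _
      ≤ ((P \ B).card : ℝ) := by convert (Nat.cast_le (α := ℝ)).mpr hsub <;> rfl
    _ ≤ ε * P.card := key
    _ = ε * Fintype.card ((s : {v // v ∈ I.S}) → AuxSrc C A' s.1) := by rw [hcardMsg]

end
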